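/- Let n ≥ 2 and let f be a solution of the n×n Pulsar puzzle. Then the first column below the top row satisfies the symmetric sum property: for every j with 2 ≤ j ≤ n, f(j,1) + f(n+2−j,1) = n. -/

import Mathlib

/-- The circled set `C n` of the `n × n` Pulsar puzzle, as a predicate on cells `(r, c)`
(1-indexed).  `C 1 = {(1,1)}`, and for `n ≥ 2`, a cell `(r,c)` of the grid is circled iff
`r = 1`, or `r ≥ 2`, `c ≥ 2` and `(n - c + 1, r - 1)` is circled in `C (n-1)`. -/
def Circled : ℕ → ℕ × ℕ → Prop
  | 0, _ => False
  | 1, p => p = (1, 1)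
  | (n + 2), (r, c) =>
      1 ≤ r ∧ r ≤ n + 2 ∧ 1 ≤ c ∧ c ≤ n + 2 ∧
        (r = 1 ∨ (2 ≤ r ∧ 2 ≤ c ∧ Circled (n + 1) (n + 2 - c + 1, r - 1)))

open Finset
open scoped Classical

lemma circled_bounds : ∀ n r c, Circled n (r, c) → 1 ≤ r ∧ r ≤ n ∧ 1 ≤ c ∧ c ≤ n := by
  intro n r c h
  match n with
  | 0 => exact absurd h (by simp [Circled])
  | 1 => simp [Circled, Prod.ext_iff] at h; omega
  | (n+2) => rw [Circled] at h; omega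

lemma circled_row_one (n c : ℕ) (h1 : 1 ≤ c) (h2 : c ≤ n) : Circled n (1, c) := by
  match n with
  | 0 => omega
  | 1 => interval_cases c <;> simp [Circled]
  | (n+2) => rw [Circled]; omega

lemma circled_col_one (n r : ℕ) (h : Circled n (r, 1)) : r = 1 := by
  match n with
  | 0 => exact absurd h (by simp [Circled])
  | 1 => simp [Circled, Prod.ext_iff] at h; omega
  | (n+2) => rw [Circled] at h; omega

lemma circled_iff (n r c : ℕ) (hr : 2 ≤ r) (hr2 : r ≤ n + 2) (hc2 : c ≤ n + 2) :
    Circled (n+2) (r, c) ↔ 2 ≤ c ∧ Circled (n+1) (n + 3 - c, r - 1) := by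
  rw [Circled]
  have e : n + 2 - c + 1 = n + 3 - c := by omega
  rw [e]
  constructor
  · rintro ⟨-, -, -, -, h | ⟨-, hc, h⟩⟩
    · omega
    · exact ⟨hc, h⟩
  · rintro ⟨hc, h⟩
    exact ⟨by omega, by omega, by omega, by omega, Or.inr ⟨hr, hc, h⟩⟩

noncomputable def Rw (n r : ℕ) : ℕ := ((Icc 1 n).filter (fun c => Circled n (r, c))).card
noncomputable def Kl (n c : ℕ) : ℕ := ((Icc 1 n).filter (fun r => Circled n (r, c))).card

lemma Rw_one (n : ℕ) : Rw n 1 = n := by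
  unfold Rw
  rw [filter_true_of_mem, Nat.card_Icc]
  · omega
  · intro c hc; simp only [mem_Icc] at hc; exact circled_row_one n c hc.1 hc.2

lemma Kl_one (n : ℕ) (hn : 1 ≤ n) : Kl n 1 = 1 := by
  unfold Kl
  have : (Icc 1 n).filter (fun r => Circled n (r, 1)) = {1} := by
    ext r
    simp only [mem_filter, mem_Icc, mem_singleton]
    constructor
    · rintro ⟨-, h⟩; exact circled_col_one n r h
    · rintro rfl; exact ⟨⟨le_refl _, hn⟩, circled_row_one n 1 le_rfl hn⟩
  rw [this, card_singleton]

lemma Rw_rec (n r : ℕ) (hr : 2 ≤ r) (hr2 : r ≤ n + 2) : Rw (n+2) r = Kl (n+1) (r-1) := by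
  unfold Rw Kl
  apply card_nbij' (fun c => n + 3 - c) (fun c => n + 3 - c)
  · intro c hc
    simp only [mem_coe, mem_filter, mem_Icc] at hc ⊢
    rw [circled_iff n r c hr hr2 hc.1.2] at hc
    refine ⟨⟨by omega, by omega⟩, hc.2.2⟩
  · intro c hc
    simp only [mem_coe, mem_filter, mem_Icc] at hc ⊢
    refine ⟨⟨by omega, by omega⟩, ?_⟩
    rw [circled_iff n r _ hr hr2 (by omega)]
    refine ⟨by omega, ?_⟩
    convert hc.2 using 3 <;> omega
  · intro c hc; simp only [mem_coe, mem_filter, mem_Icc] at hc ⊢; omega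
  · intro c hc; simp only [mem_coe, mem_filter, mem_Icc] at hc ⊢; omega

lemma Kl_rec (n c : ℕ) (hc : 2 ≤ c) (hc2 : c ≤ n + 2) :
    Kl (n+2) c = 1 + Rw (n+1) (n+3-c) := by
  unfold Kl Rw
  have h1 : (Icc 1 (n+2)).filter (fun r => Circled (n+2) (r, c)) =
      insert 1 ((Icc 2 (n+2)).filter (fun r => Circled (n+2) (r, c))) := by
    ext r
    simp only [mem_insert, mem_filter, mem_Icc]
    constructor
    · rintro ⟨⟨h1, h2⟩, h3⟩
      rcases Nat.eq_or_lt_of_le h1 with h | h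
      · left; omega
      · right; exact ⟨⟨by omega, h2⟩, h3⟩
    · rintro (rfl | ⟨⟨h1, h2⟩, h3⟩)
      · exact ⟨⟨le_rfl, by omega⟩, circled_row_one _ c (by omega) hc2⟩
      · exact ⟨⟨by omega, h2⟩, h3⟩
  rw [h1, card_insert_of_notMem (by simp), add_comm]
  congr 1
  apply card_nbij' (fun r => r - 1) (fun r => r + 1)
  · intro r hr
    simp only [mem_coe, mem_filter, mem_Icc] at hr ⊢
    rw [circled_iff n r c (by omega) hr.1.2 hc2] at hr
    exact ⟨⟨by omega, by omega⟩, hr.2.2⟩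
  · intro r hr
    simp only [mem_coe, mem_filter, mem_Icc] at hr ⊢
    refine ⟨⟨by omega, by omega⟩, ?_⟩
    rw [circled_iff n (r+1) c (by omega) (by omega) hc2]
    refine ⟨hc, ?_⟩
    have e : r + 1 - 1 = r := by omega
    rw [e]
    exact hr.2
  · intro r hr; simp only [mem_coe, mem_filter, mem_Icc] at hr ⊢; omega
  · intro r hr; simp only [mem_coe, mem_filter, mem_Icc] at hr ⊢; omega

structure SpiralFacts (n : ℕ) : Prop where
  rw_one : Rw n 1 = n
  rw_pair : ∀ j, 2 ≤ j → j ≤ n → Rw n j + Rw n (n + 2 - j) = n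
  rw_surj : ∀ v, 1 ≤ v → v ≤ n → ∃ r, 1 ≤ r ∧ r ≤ n ∧ Rw n r = v
  kl_one : Kl n 1 = 1
  kl_pair : ∀ c, 2 ≤ c → c + 1 ≤ n → Kl n c + Kl n (n + 1 - c) = n + 1
  kl_last : Kl n n = n
  kl_surj : ∀ v, 1 ≤ v → v ≤ n → ∃ c, 1 ≤ c ∧ c ≤ n ∧ Kl n c = v

lemma spiralFacts : ∀ n, 1 ≤ n → SpiralFacts n := by
  intro n hn
  induction n, hn using Nat.le_induction with
  | base =>
    have h1 : Rw 1 1 = 1 := Rw_one 1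
    have h2 : Kl 1 1 = 1 := Kl_one 1 le_rfl
    exact ⟨h1, by omega, fun v hv1 hv2 => ⟨1, le_rfl, le_rfl, by omega⟩, h2,
      by omega, h2, fun v hv1 hv2 => ⟨1, le_rfl, le_rfl, by omega⟩⟩
  | succ n hn ih =>
    match n, hn with
    | 1, _ =>
      show SpiralFacts 2
      have r1 : Rw 2 1 = 2 := Rw_one 2
      have r2 : Rw 2 2 = Kl 1 1 := Rw_rec 0 2 le_rfl le_rfl
      have k1 : Kl 2 1 = 1 := Kl_one 2 (by omega)
      have k2 : Kl 2 2 = 1 + Rw 1 1 := Kl_rec 0 2 le_rfl le_rfl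
      have e1 : Kl 1 1 = 1 := Kl_one 1 le_rfl
      have e2 : Rw 1 1 = 1 := Rw_one 1
      refine ⟨r1, ?_, ?_, k1, by omega, by omega, ?_⟩
      · intro j h2 h3
        have : j = 2 := by omega
        subst this
        simpa using by omega
      · intro v hv1 hv2
        rcases Nat.eq_or_lt_of_le hv1 with h | h
        · exact ⟨2, by omega, by omega, by omega⟩
        · exact ⟨1, by omega, by omega, by omega⟩
      · intro v hv1 hv2
        rcases Nat.eq_or_lt_of_le hv1 with h | h
        · exact ⟨1, by omega, by omega, by omega⟩
        · exact ⟨2, by omega, by omega, by omega⟩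
    | (m+2), _ =>
      -- proving SpiralFacts (m+3) from ih : SpiralFacts (m+2)
      set N := m + 2 with hN
      -- recursions: Rw (N+1) r = Kl N (r-1) for 2 ≤ r ≤ N+1, etc.
      have hrec : ∀ r, 2 ≤ r → r ≤ N + 1 → Rw (N+1) r = Kl N (r - 1) := by
        intro r h1 h2
        have := Rw_rec (m+1) r h1 (by omega)
        simpa [hN] using this
      have hkec : ∀ c, 2 ≤ c → c ≤ N + 1 → Kl (N+1) c = 1 + Rw N (N + 2 - c) := by
        intro c h1 h2
        have := Kl_rec (m+1) c h1 (by omega)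
        have e : m + 1 + 3 - c = N + 2 - c := by omega
        rw [e] at this
        simpa [hN] using this
      refine ⟨Rw_one _, ?_, ?_, Kl_one _ (by omega), ?_, ?_, ?_⟩
      · -- rw_pair
        intro j h2 h3
        rw [hrec j h2 h3, hrec (N + 1 + 2 - j) (by omega) (by omega)]
        have e : N + 1 + 2 - j - 1 = N + 2 - j := by omega
        rw [e]
        set c := j - 1 with hc
        have hc1 : 1 ≤ c := by omega
        have hc2 : c ≤ N := by omega
        have e2 : N + 2 - j = N + 1 - c := by omega
        rw [e2]
        rcases Nat.eq_or_lt_of_le hc1 with h | h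
        · have : N + 1 - c = N := by omega
          rw [this, ← h, ih.kl_one, ih.kl_last]; omega
        · rcases Nat.eq_or_lt_of_le hc2 with h' | h'
          · have : N + 1 - c = 1 := by omega
            rw [this, h', ih.kl_last, ih.kl_one]
          · have := ih.kl_pair c (by omega) (by omega)
            omega
      · -- rw_surj
        intro v hv1 hv2
        rcases Nat.eq_or_lt_of_le hv2 with h | h
        · exact ⟨1, by omega, by omega, by have := Rw_one (N+1); omega⟩
        · obtain ⟨c, hc1, hc2, hc3⟩ := ih.kl_surj v hv1 (by omega)
          refine ⟨c + 1, by omega, by omega, ?_⟩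
          rw [hrec (c+1) (by omega) (by omega)]
          simpa using hc3
      · -- kl_pair
        intro c h2 h3
        rw [hkec c h2 (by omega), hkec (N + 1 + 1 - c) (by omega) (by omega)]
        have e1 : N + 2 - (N + 1 + 1 - c) = c := by omega
        rw [e1]
        have := ih.rw_pair c h2 (by omega)
        have e2 : N + 2 - c = N + 2 - c := rfl
        omega
      · -- kl_last
        rw [hkec (N+1) (by omega) le_rfl]
        have e : N + 2 - (N + 1) = 1 := by omega
        rw [e, ih.rw_one]
        omega
      · -- kl_surj
        intro v hv1 hv2
        rcases Nat.eq_or_lt_of_le hv1 with h | h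
        · exact ⟨1, by omega, by omega, by rw [Kl_one _ (by omega)]; omega⟩
        · obtain ⟨r, hr1, hr2, hr3⟩ := ih.rw_surj (v - 1) (by omega) (by omega)
          refine ⟨N + 2 - r, by omega, by omega, ?_⟩
          rw [hkec (N + 2 - r) (by omega) (by omega)]
          have e : N + 2 - (N + 2 - r) = r := by omega
          rw [e]; omega

lemma Rw_image (n : ℕ) (hn : 1 ≤ n) : (Icc 1 n).image (Rw n) = Icc 1 n := by
  have hsub : Icc 1 n ⊆ (Icc 1 n).image (Rw n) := by
    intro v hv
    simp only [mem_Icc] at hv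
    obtain ⟨r, h1, h2, h3⟩ := (spiralFacts n hn).rw_surj v hv.1 hv.2
    simp only [mem_image, mem_Icc]
    exact ⟨r, ⟨h1, h2⟩, h3⟩
  exact (eq_of_subset_of_card_le hsub (card_image_le)).symm

lemma Rw_injOn (n : ℕ) (hn : 1 ≤ n) : Set.InjOn (Rw n) (Icc 1 n) := by
  apply injOn_of_card_image_eq
  rw [Rw_image n hn]

lemma Rw_mem (n : ℕ) (hn : 1 ≤ n) (r : ℕ) (h1 : 1 ≤ r) (h2 : r ≤ n) :
    1 ≤ Rw n r ∧ Rw n r ≤ n := by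
  have : Rw n r ∈ Icc 1 n := by
    rw [← Rw_image n hn]
    exact mem_image_of_mem _ (mem_Icc.2 ⟨h1, h2⟩)
  simpa using this

lemma sum_Rw_comp (n : ℕ) (hn : 1 ≤ n) (g : ℕ → ℕ) :
    ∑ r ∈ Icc 1 n, g (Rw n r) = ∑ k ∈ Icc 1 n, g k := by
  conv_rhs => rw [← Rw_image n hn]
  rw [sum_image (fun x hx y hy h => Rw_injOn n hn hx hy h)]

noncomputable def circFin (n : ℕ) : Finset (ℕ × ℕ) :=
  ((Icc 1 n) ×ˢ (Icc 1 n)).filter (fun p => Circled n p)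

lemma mem_circFin (n : ℕ) (p : ℕ × ℕ) : p ∈ circFin n ↔ Circled n p := by
  simp only [circFin, mem_filter, mem_product, mem_Icc, and_iff_right_iff_imp]
  intro h
  obtain ⟨h1, h2, h3, h4⟩ := circled_bounds n p.1 p.2 (by rwa [Prod.mk.eta])
  exact ⟨⟨h1, h2⟩, ⟨h3, h4⟩⟩

lemma gauss_Icc (n : ℕ) : 2 * ∑ k ∈ Icc 1 n, k = n * (n + 1) := by
  induction n with
  | zero => simp
  | succ n ih =>
    rw [Finset.sum_Icc_succ_top (by omega)]
    ring_nf
    ring_nf at ih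
    omega

lemma card_circFin (n : ℕ) (hn : 1 ≤ n) : 2 * (circFin n).card = n * (n + 1) := by
  have h1 : (circFin n).card = ∑ r ∈ Icc 1 n, Rw n r := by
    rw [card_eq_sum_card_fiberwise (f := Prod.fst) (t := Icc 1 n)]
    · apply sum_congr rfl
      intro r hr
      unfold Rw
      apply card_nbij' (fun p => p.2) (fun c => (r, c))
      · rintro ⟨pr, pc⟩ hp
        simp only [mem_coe, mem_filter, mem_circFin] at hp
        obtain ⟨h1, h2, h3, h4⟩ := circled_bounds n pr pc hp.1
        simp only [mem_coe, mem_filter, mem_Icc]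
        refine ⟨⟨h3, h4⟩, ?_⟩
        have : pr = r := hp.2
        rw [← this]
        exact hp.1
      · intro c hc
        simp only [mem_coe, mem_filter, mem_Icc] at hc
        simp only [mem_coe, mem_filter, mem_circFin]
        exact ⟨hc.2, trivial⟩
      · rintro ⟨pr, pc⟩ hp
        simp only [mem_coe, mem_filter] at hp
        have : pr = r := hp.2
        rw [this]
      · intro c hc; rfl
    · intro p hp
      rw [mem_coe, mem_circFin] at hp
      obtain ⟨h1, h2, h3, h4⟩ := circled_bounds n p.1 p.2 (by rwa [Prod.mk.eta])
      simp only [mem_coe, mem_Icc]; exact ⟨h1, h2⟩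
  rw [h1, sum_Rw_comp n hn (fun k => k), gauss_Icc]

/-- `f` is a Latin square of order `n`: on the grid of cells `(r, c)` with `1 ≤ r, c ≤ n`
it takes values in `{1, …, n}`, with distinct values on distinct cells of any one row
and on distinct cells of any one column. -/
def IsLatinSquare (n : ℕ) (f : ℕ × ℕ → ℕ) : Prop :=
  (∀ r c, 1 ≤ r → r ≤ n → 1 ≤ c → c ≤ n → 1 ≤ f (r, c) ∧ f (r, c) ≤ n) ∧
  (∀ r c₁ c₂, 1 ≤ r → r ≤ n → 1 ≤ c₁ → c₁ ≤ n → 1 ≤ c₂ → c₂ ≤ n → c₁ ≠ c₂ →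
    f (r, c₁) ≠ f (r, c₂)) ∧
  (∀ r₁ r₂ c, 1 ≤ r₁ → r₁ ≤ n → 1 ≤ r₂ → r₂ ≤ n → 1 ≤ c → c ≤ n → r₁ ≠ r₂ →
    f (r₁, c) ≠ f (r₂, c))

/-- `f` is a solution of the `n × n` Pulsar puzzle: a Latin square of order `n` such that
each circled entry equals the number of circled cells carrying that same value. -/
def IsPulsarSolution (n : ℕ) (f : ℕ × ℕ → ℕ) : Prop :=
  IsLatinSquare n f ∧
    ∀ p, Circled n p → f p = Set.ncard {q : ℕ × ℕ | Circled n q ∧ f q = f p}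

section Solution

variable {n : ℕ} {f : ℕ × ℕ → ℕ} (hn : 1 ≤ n) (hf : IsPulsarSolution n f)

/-- circled cells with value `v` -/
noncomputable def clsF (n : ℕ) (f : ℕ × ℕ → ℕ) (v : ℕ) : Finset (ℕ × ℕ) :=
  (circFin n).filter (fun q => f q = v)

include hf in
lemma sol_count (p : ℕ × ℕ) (hp : Circled n p) : f p = (clsF n f (f p)).card := by
  have h := hf.2 p hp
  have e : {q : ℕ × ℕ | Circled n q ∧ f q = f p} = ↑(clsF n f (f p)) := by
    ext q
    simp [clsF, mem_circFin]
  have e2 : {q : ℕ × ℕ | Circled n q ∧ f q = f p}.ncard = (clsF n f (f p)).card := by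
    rw [e, Set.ncard_coe_finset]
  exact h.trans e2

include hn hf in
lemma class_card (v : ℕ) (hv1 : 1 ≤ v) (hv2 : v ≤ n) : (clsF n f v).card = v := by
  classical
  set Vals := (circFin n).image f with hV
  have hsub : Vals ⊆ Icc 1 n := by
    intro v hv
    simp only [hV, mem_image] at hv
    obtain ⟨p, hp, rfl⟩ := hv
    rw [mem_circFin] at hp
    obtain ⟨h1, h2, h3, h4⟩ := circled_bounds n p.1 p.2 (by rwa [Prod.mk.eta])
    have := hf.1.1 p.1 p.2 h1 h2 h3 h4
    rw [Prod.mk.eta] at this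
    simpa using this
  have hcard : ∀ w ∈ Vals, (clsF n f w).card = w := by
    intro w hw
    simp only [hV, mem_image] at hw
    obtain ⟨p, hp, rfl⟩ := hw
    exact (sol_count hf p ((mem_circFin n p).1 hp)).symm
  have hsum : ∑ w ∈ Vals, w = ∑ w ∈ Icc 1 n, w := by
    have h1 : (circFin n).card = ∑ w ∈ Vals, (clsF n f w).card := by
      apply card_eq_sum_card_fiberwise
      intro p hp
      exact mem_image_of_mem f hp
    have h2 : ∑ w ∈ Vals, (clsF n f w).card = ∑ w ∈ Vals, w :=
      sum_congr rfl hcard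
    have h3 := card_circFin n hn
    have h4 := gauss_Icc n
    omega
  have hVals : Vals = Icc 1 n := by
    by_contra hne
    have hss : Vals ⊂ Icc 1 n := hsub.ssubset_of_ne hne
    obtain ⟨i, hi, hi2⟩ := exists_of_ssubset hss
    have := Finset.sum_lt_sum_of_subset hsub hi hi2 (by simp only [mem_Icc] at hi; omega)
      (fun j _ _ => Nat.zero_le j)
    omega
  apply hcard
  rw [hVals]
  simp only [mem_Icc]
  exact ⟨hv1, hv2⟩

/-- rows in which value `v` appears circled -/
noncomputable def rowsOf (n : ℕ) (f : ℕ × ℕ → ℕ) (v : ℕ) : Finset ℕ :=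
  (Icc 1 n).filter (fun r => ∃ c ∈ Icc 1 n, Circled n (r, c) ∧ f (r, c) = v)

include hn hf in
lemma rowsOf_card (v : ℕ) (hv1 : 1 ≤ v) (hv2 : v ≤ n) : (rowsOf n f v).card = v := by
  suffices h : (clsF n f v).card = (rowsOf n f v).card by
    rw [← h, class_card hn hf v hv1 hv2]
  apply card_bij (fun p _ => p.1)
  · rintro ⟨pr, pc⟩ hp
    simp only [clsF, mem_filter, mem_circFin] at hp
    obtain ⟨h1, h2, h3, h4⟩ := circled_bounds n pr pc hp.1
    simp only [rowsOf, mem_filter, mem_Icc]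
    exact ⟨⟨h1, h2⟩, pc, ⟨h3, h4⟩, hp.1, hp.2⟩
  · rintro ⟨pr, pc⟩ hp ⟨qr, qc⟩ hq hpq
    simp only [clsF, mem_filter, mem_circFin] at hp hq
    simp only at hpq
    subst hpq
    obtain ⟨h1, h2, h3, h4⟩ := circled_bounds n pr pc hp.1
    obtain ⟨g1, g2, g3, g4⟩ := circled_bounds n pr qc hq.1
    by_contra hne
    have hcc : pc ≠ qc := by simp [Prod.ext_iff] at hne ⊢; tauto
    exact hf.1.2.1 pr pc qc h1 h2 h3 h4 g3 g4 hcc (by rw [hp.2, hq.2])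
  · intro r hr
    simp only [rowsOf, mem_filter, mem_Icc] at hr
    obtain ⟨⟨h1, h2⟩, c, hc, hcirc, hval⟩ := hr
    exact ⟨(r, c), by simp only [clsF, mem_filter, mem_circFin]; exact ⟨hcirc, hval⟩, rfl⟩

/-- circled values in row `r` -/
noncomputable def Svals (n : ℕ) (f : ℕ × ℕ → ℕ) (r : ℕ) : Finset ℕ :=
  ((Icc 1 n).filter (fun c => Circled n (r, c))).image (fun c => f (r, c))

include hf in
lemma Svals_card (r : ℕ) (h1 : 1 ≤ r) (h2 : r ≤ n) : (Svals n f r).card = Rw n r := by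
  unfold Svals Rw
  apply card_image_of_injOn
  intro c1 hc1 c2 hc2 he
  simp only [coe_filter, Set.mem_setOf_eq, mem_Icc] at hc1 hc2
  by_contra hne
  exact hf.1.2.1 r c1 c2 h1 h2 hc1.1.1 hc1.1.2 hc2.1.1 hc2.1.2 hne he

lemma mem_Svals_iff (r v : ℕ) (h1 : 1 ≤ r) (h2 : r ≤ n) :
    v ∈ Svals n f r ↔ r ∈ rowsOf n f v := by
  simp only [Svals, rowsOf, mem_image, mem_filter, mem_Icc]
  constructor
  · rintro ⟨c, ⟨hc, hcirc⟩, hval⟩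
    exact ⟨⟨h1, h2⟩, c, hc, hcirc, hval⟩
  · rintro ⟨-, c, hc, hcirc, hval⟩
    exact ⟨c, ⟨hc, hcirc⟩, hval⟩

end Solution

lemma card_filter_swap (s t : Finset ℕ) (R : ℕ → ℕ → Prop) [∀ k j, Decidable (R k j)] :
    ∑ k ∈ s, (t.filter (fun j => R k j)).card = ∑ j ∈ t, (s.filter (fun k => R k j)).card := by
  simp only [card_filter]
  exact Finset.sum_comm

section Solution2

variable {n : ℕ} {f : ℕ × ℕ → ℕ} (hn : 1 ≤ n) (hf : IsPulsarSolution n f)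

include hn hf in
lemma sum_Svals_inter (t : ℕ) (ht1 : 1 ≤ t) (ht2 : t ≤ n) :
    ∑ r ∈ Icc 1 n, ((Svals n f r) ∩ Icc t n).card = ∑ v ∈ Icc t n, v := by
  classical
  have e1 : ∀ r, (Svals n f r) ∩ Icc t n = (Icc t n).filter (fun v => v ∈ Svals n f r) := by
    intro r
    ext v
    simp only [mem_inter, mem_filter]
    tauto
  simp only [e1]
  rw [card_filter_swap (Icc 1 n) (Icc t n) (fun r v => v ∈ Svals n f r)]
  apply sum_congr rfl
  intro v hv
  simp only [mem_Icc] at hv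
  have e2 : (Icc 1 n).filter (fun r => v ∈ Svals n f r) = rowsOf n f v := by
    ext r
    simp only [mem_filter, rowsOf]
    constructor
    · rintro ⟨hr, hs⟩
      simp only [mem_Icc] at hr
      have := (mem_Svals_iff r v hr.1 hr.2).1 hs
      simpa [rowsOf] using this
    · intro hr
      have hr' := hr.1
      simp only [mem_Icc] at hr'
      refine ⟨hr.1, (mem_Svals_iff r v hr'.1 hr'.2).2 ?_⟩
      simp only [rowsOf, mem_filter]
      exact hr
  rw [e2, rowsOf_card hn hf v (by omega) hv.2]

lemma minsum (n t : ℕ) (ht1 : 1 ≤ t) (ht2 : t ≤ n) :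
    ∑ k ∈ Icc 1 n, min k (n + 1 - t) = ∑ v ∈ Icc t n, v := by
  classical
  set m := n + 1 - t with hm
  have hm1 : 1 ≤ m := by omega
  have hm2 : m ≤ n := by omega
  have step1 : ∀ k ∈ Icc 1 n, min k m = ((Icc 1 n).filter (fun j => j ≤ k ∧ j ≤ m)).card := by
    intro k hk
    simp only [mem_Icc] at hk
    have : (Icc 1 n).filter (fun j => j ≤ k ∧ j ≤ m) = Icc 1 (min k m) := by
      ext j
      simp only [mem_filter, mem_Icc, le_min_iff]
      omega
    rw [this, Nat.card_Icc]
    omega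
  rw [sum_congr rfl step1,
    card_filter_swap (Icc 1 n) (Icc 1 n) (fun k j => j ≤ k ∧ j ≤ m)]
  have step3 : ∀ j ∈ Icc 1 n,
      ((Icc 1 n).filter (fun k => j ≤ k ∧ j ≤ m)).card = if j ≤ m then n + 1 - j else 0 := by
    intro j hj
    simp only [mem_Icc] at hj
    by_cases h : j ≤ m
    · rw [if_pos h]
      have : (Icc 1 n).filter (fun k => j ≤ k ∧ j ≤ m) = Icc j n := by
        ext k; simp only [mem_filter, mem_Icc]; omega
      rw [this, Nat.card_Icc]
    · rw [if_neg h]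
      have : (Icc 1 n).filter (fun k => j ≤ k ∧ j ≤ m) = ∅ := by
        ext k; simp only [mem_filter, mem_Icc, notMem_empty, iff_false]; omega
      rw [this, card_empty]
  rw [sum_congr rfl step3, sum_ite, sum_const_zero, add_zero]
  have e4 : (Icc 1 n).filter (fun j => j ≤ m) = Icc 1 m := by
    ext j; simp only [mem_filter, mem_Icc]; omega
  rw [e4]
  apply Finset.sum_nbij' (i := fun j => n + 1 - j) (j := fun v => n + 1 - v)
  · intro j hj; simp only [mem_Icc] at hj ⊢; omega
  · intro v hv; simp only [mem_Icc] at hv ⊢; omega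
  · intro j hj; simp only [mem_Icc] at hj; omega
  · intro v hv; simp only [mem_Icc] at hv; omega
  · intro j hj; rfl

include hn hf in
lemma staircase (r v : ℕ) (hr1 : 1 ≤ r) (hr2 : r ≤ n) (hv1 : 1 ≤ v) (hv2 : v ≤ n)
    (hge : n + 1 - Rw n r ≤ v) : v ∈ Svals n f r := by
  have hterm : ∀ r' ∈ Icc 1 n,
      ((Svals n f r') ∩ Icc v n).card ≤ min (Rw n r') (n + 1 - v) := by
    intro r' hr'
    simp only [mem_Icc] at hr'
    apply le_min
    · calc ((Svals n f r') ∩ Icc v n).card ≤ (Svals n f r').card :=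
            card_le_card inter_subset_left
        _ = Rw n r' := Svals_card hf r' hr'.1 hr'.2
    · calc ((Svals n f r') ∩ Icc v n).card ≤ (Icc v n).card :=
            card_le_card inter_subset_right
        _ = n + 1 - v := by rw [Nat.card_Icc]
  have hsum : ∑ r' ∈ Icc 1 n, ((Svals n f r') ∩ Icc v n).card
      = ∑ r' ∈ Icc 1 n, min (Rw n r') (n + 1 - v) := by
    rw [sum_Svals_inter hn hf v hv1 hv2]
    rw [show (∑ r' ∈ Icc 1 n, min (Rw n r') (n + 1 - v))
        = ∑ k ∈ Icc 1 n, min k (n + 1 - v) from sum_Rw_comp n hn (fun k => min k (n + 1 - v)),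
      minsum n v hv1 hv2]
  have heq := (Finset.sum_eq_sum_iff_of_le hterm).1 hsum r (by simp only [mem_Icc]; omega)
  have hRw := Rw_mem n hn r hr1 hr2
  have hmin : min (Rw n r) (n + 1 - v) = n + 1 - v := by omega
  rw [hmin] at heq
  have hfull : (Svals n f r) ∩ Icc v n = Icc v n := by
    apply eq_of_subset_of_card_le inter_subset_right
    rw [heq, Nat.card_Icc]
  have : v ∈ (Svals n f r) ∩ Icc v n := by
    rw [hfull]; simp only [mem_Icc]; omega
  exact (mem_inter.1 this).1

end Solution2

lemma Rw_image2 (n : ℕ) (hn : 2 ≤ n) : (Icc 2 n).image (Rw n) = Icc 1 (n - 1) := by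
  have hn1 : 1 ≤ n := by omega
  have hsub : Icc 2 n ⊆ Icc 1 n := by intro x hx; simp only [mem_Icc] at hx ⊢; omega
  have hinj : Set.InjOn (Rw n) (Icc 2 n) := (Rw_injOn n hn1).mono (by exact_mod_cast hsub)
  have hX1 : (Icc 2 n).image (Rw n) ⊆ (Icc 1 n).erase n := by
    intro v hv
    simp only [mem_image] at hv
    obtain ⟨j, hj, rfl⟩ := hv
    rw [mem_erase]
    constructor
    · intro heq
      have h1 : (1 : ℕ) ∈ Icc 1 n := by simp only [mem_Icc]; omega
      have hjj : j ∈ Icc 1 n := hsub hj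
      have := Rw_injOn n hn1 hjj h1 (by rw [heq, Rw_one])
      simp only [mem_Icc] at hj
      omega
    · rw [← Rw_image n hn1]
      exact mem_image_of_mem _ (hsub hj)
  have hcard : ((Icc 1 n).erase n).card ≤ ((Icc 2 n).image (Rw n)).card := by
    rw [card_erase_of_mem (by simp only [mem_Icc]; omega), Nat.card_Icc,
      card_image_of_injOn hinj, Nat.card_Icc]
    omega
  have := eq_of_subset_of_card_le hX1 hcard
  rw [this]
  ext x
  simp only [mem_erase, mem_Icc]
  omega

lemma sum_n_sub_Rw (n : ℕ) (hn : 2 ≤ n) :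
    ∑ j ∈ Icc 2 n, (n - Rw n j) = ∑ k ∈ Icc 1 (n - 1), k := by
  have hn1 : 1 ≤ n := by omega
  have hsub : Icc 2 n ⊆ Icc 1 n := by intro x hx; simp only [mem_Icc] at hx ⊢; omega
  have hinj : Set.InjOn (Rw n) (Icc 2 n) := (Rw_injOn n hn1).mono (by exact_mod_cast hsub)
  have h1 : ∑ j ∈ Icc 2 n, (n - Rw n j) = ∑ k ∈ (Icc 2 n).image (Rw n), (n - k) := by
    rw [sum_image (fun x hx y hy h => hinj hx hy h)]
  rw [h1, Rw_image2 n hn]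
  apply Finset.sum_nbij' (i := fun k => n - k) (j := fun k => n - k)
  · intro j hj; simp only [mem_Icc] at hj ⊢; omega
  · intro v hv; simp only [mem_Icc] at hv ⊢; omega
  · intro j hj; simp only [mem_Icc] at hj; omega
  · intro v hv; simp only [mem_Icc] at hv; omega
  · intro j hj; rfl

/-- In any solution of the `n × n` Pulsar puzzle with `n ≥ 2`, the first column below
the top row satisfies the symmetric sum property: `f (j, 1) + f (n + 2 - j, 1) = n`. -/
theorem pulsar_first_column_symmetric_sum (n : ℕ) (hn : 2 ≤ n) (f : ℕ × ℕ → ℕ)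
    (hf : IsPulsarSolution n f) :
    ∀ j, 2 ≤ j → j ≤ n → f (j, 1) + f (n + 2 - j, 1) = n := by
  have hn1 : 1 ≤ n := by omega
  -- main claim: f (j,1) = n - Rw n j for j ∈ [2, n]
  have hub : ∀ j ∈ Icc 2 n, f (j, 1) ≤ n - Rw n j := by
    intro j hj
    simp only [mem_Icc] at hj
    have hlat := hf.1.1 j 1 (by omega) hj.2 le_rfl hn1
    have hRw := Rw_mem n hn1 j (by omega) hj.2
    by_contra hcon
    have hge : n + 1 - Rw n j ≤ f (j, 1) := by omega
    have hmem := staircase hn1 hf j (f (j, 1)) (by omega) hj.2 hlat.1 hlat.2 hge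
    simp only [Svals, mem_image, mem_filter, mem_Icc] at hmem
    obtain ⟨c, ⟨hc, hcirc⟩, hval⟩ := hmem
    rcases Nat.eq_or_lt_of_le hc.1 with h | h
    · have := circled_col_one n j (by rw [← h] at hcirc; exact hcirc)
      omega
    · exact hf.1.2.1 j c 1 (by omega) hj.2 (by omega) hc.2 le_rfl hn1 (by omega) hval
  have hsumf : ∑ j ∈ Icc 2 n, f (j, 1) = ∑ k ∈ Icc 1 (n - 1), k := by
    have hinj : Set.InjOn (fun j => f (j, 1)) (Icc 2 n) := by
      intro a ha b hb hab
      simp only [coe_Icc, Set.mem_Icc] at ha hb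
      by_contra hne
      exact hf.1.2.2 a b 1 (by omega) ha.2 (by omega) hb.2 le_rfl hn1 hne hab
    have himsub : (Icc 2 n).image (fun j => f (j, 1)) ⊆ Icc 1 (n - 1) := by
      intro v hv
      simp only [mem_image] at hv
      obtain ⟨j, hj, rfl⟩ := hv
      have hj' := hj
      simp only [mem_Icc] at hj'
      have hlat := hf.1.1 j 1 (by omega) hj'.2 le_rfl hn1
      have hRw := Rw_mem n hn1 j (by omega) hj'.2
      have := hub j hj
      simp only [mem_Icc]
      omega
    have him : (Icc 2 n).image (fun j => f (j, 1)) = Icc 1 (n - 1) := by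
      apply eq_of_subset_of_card_le himsub
      rw [card_image_of_injOn hinj, Nat.card_Icc, Nat.card_Icc]
      omega
    rw [← him, sum_image (fun x hx y hy h => hinj hx hy h)]
  have heq : ∀ j ∈ Icc 2 n, f (j, 1) = n - Rw n j := by
    apply (Finset.sum_eq_sum_iff_of_le hub).1
    rw [hsumf, sum_n_sub_Rw n hn]
  intro j hj1 hj2
  have h1 := heq j (by simp only [mem_Icc]; omega)
  have h2 := heq (n + 2 - j) (by simp only [mem_Icc]; omega)
  have hpair := (spiralFacts n hn1).rw_pair j hj1 hj2
  have hb1 := Rw_mem n hn1 j (by omega) hj2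
  have hb2 := Rw_mem n hn1 (n + 2 - j) (by omega) (by omega)
  omega
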